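/- For λ ≤ k and n ≥ max(k+r, k+s, k+λ, r+s), any simple partial r×s λ-Latin rectangle on symbol set [k] can be extended to a simple n×n λ-Latin square on symbol set [n]. -/

import Mathlib

open Finset

open Function

variable {n q L m : ℕ}

/-- Push an alternating cycle through a matrix. -/
lemma push_cycle [NeZero m] (hm : 2 ≤ m) (D : Fin n → Fin n → ℕ)
    (hcap : ∀ i j, D i j ≤ q)
    (I J : Fin m → Fin n) (hI : Injective I) (hJ : Injective J)
    (hplus : ∀ t, 0 < D (I t) (J t) ∧ D (I t) (J t) < q)
    (hminus : ∀ t, 0 < D (I t) (J (t+1)) ∧ D (I t) (J (t+1)) < q) :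
    ∃ D' : Fin n → Fin n → ℕ,
      (∀ i j, D' i j ≤ q) ∧
      (∀ i, ∑ j, D' i j = ∑ j, D i j) ∧
      (∀ j, ∑ i, D' i j = ∑ i, D i j) ∧
      (∀ i j, D i j = 0 → D' i j = 0) ∧
      (∀ i j, D i j = q → D' i j = q) ∧
      (univ.filter (fun p : Fin n × Fin n => 0 < D' p.1 p.2 ∧ D' p.1 p.2 < q)) ⊂
        (univ.filter (fun p : Fin n × Fin n => 0 < D p.1 p.2 ∧ D p.1 p.2 < q)) := by
  classical
  -- plus and minus cells are disjoint
  have hone : ((1 : Fin m) : ℕ) = 1 := by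
    rw [Fin.val_one']; exact Nat.mod_eq_of_lt (by omega)
  have hdisj : ∀ t u : Fin m, (I t, J t) ≠ (I u, J (u+1)) := by
    intro t u h
    rw [Prod.mk.injEq] at h
    obtain ⟨h1, h2⟩ := h
    have ht : t = u := hI h1
    subst ht
    have h3 : t = t + 1 := hJ h2
    have h4 : (0 : Fin m) = 1 := by
      have := congrArg (fun x => x - t) h3
      simpa using this
    rw [Fin.ext_iff, hone] at h4
    simp at h4
  set A : Finset ℕ := univ.image (fun t : Fin m => q - D (I t) (J t)) with hA
  set B : Finset ℕ := univ.image (fun t : Fin m => D (I t) (J (t+1))) with hB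
  have hAne : A.Nonempty := by
    apply Finset.Nonempty.image; exact univ_nonempty
  have hBne : B.Nonempty := by
    apply Finset.Nonempty.image; exact univ_nonempty
  set δ : ℕ := min (A.min' hAne) (B.min' hBne) with hδ
  have hδA : ∀ t, δ ≤ q - D (I t) (J t) := fun t =>
    le_trans (min_le_left _ _) (A.min'_le _ (mem_image_of_mem _ (mem_univ t)))
  have hδB : ∀ t, δ ≤ D (I t) (J (t+1)) := fun t =>
    le_trans (min_le_right _ _) (B.min'_le _ (mem_image_of_mem _ (mem_univ t)))
  have hδpos : 0 < δ := by
    rw [hδ, lt_min_iff]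
    constructor
    · rcases mem_image.1 (A.min'_mem hAne) with ⟨t, -, ht⟩
      rw [← ht]; have := hplus t; omega
    · rcases mem_image.1 (B.min'_mem hBne) with ⟨t, -, ht⟩
      rw [← ht]; have := hminus t; omega
  set P : Fin n → Fin n → Prop := fun i j => ∃ t, I t = i ∧ J t = j with hP
  set Mi : Fin n → Fin n → Prop := fun i j => ∃ t, I t = i ∧ J (t+1) = j with hMi
  have hPM : ∀ i j, P i j → Mi i j → False := by
    rintro i j ⟨t, ht1, ht2⟩ ⟨u, hu1, hu2⟩
    exact hdisj t u (by rw [Prod.mk.injEq]; exact ⟨by rw [ht1, hu1], by rw [ht2, hu2]⟩)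
  set D' : Fin n → Fin n → ℕ := fun i j =>
    if P i j then D i j + δ else if Mi i j then D i j - δ else D i j with hD'
  -- pointwise identity
  have key : ∀ i j, D' i j + δ * (if Mi i j then 1 else 0) = D i j + δ * (if P i j then 1 else 0) := by
    intro i j
    by_cases hp : P i j
    · have hmi : ¬ Mi i j := fun h => hPM _ _ hp h
      simp [hD', hp, hmi]
    · by_cases hmi : Mi i j
      · have hd : δ ≤ D i j := by
          obtain ⟨t, ht1, ht2⟩ := hmi
          rw [← ht1, ← ht2]; exact hδB t
        simp only [hD', if_neg hp, if_pos hmi, mul_one, mul_zero, add_zero]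
        omega
      · simp [hD', hp, hmi]
  have hbnd : ∀ i j, D' i j ≤ q ∧ (D i j = 0 → D' i j = 0) ∧ (D i j = q → D' i j = q) := by
    intro i j
    by_cases hp : P i j
    · obtain ⟨t, ht1, ht2⟩ := hp
      have h1 := hplus t
      have h2 := hδA t
      subst ht1; subst ht2
      constructor
      · have hP' : P (I t) (J t) := ⟨t, rfl, rfl⟩
        simp only [hD', if_pos hP']
        omega
      · constructor <;> intro h <;> omega
    · by_cases hmi : Mi i j
      · obtain ⟨t, ht1, ht2⟩ := hmi
        have h1 := hminus t
        subst ht1; subst ht2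
        have hval : D' (I t) (J (t+1)) = D (I t) (J (t+1)) - δ := by
          have hM' : Mi (I t) (J (t+1)) := ⟨t, rfl, rfl⟩
          simp only [hD', if_neg hp, if_pos hM']
        constructor
        · rw [hval]; have := hcap (I t) (J (t+1)); omega
        · constructor <;> intro h <;> rw [hval] <;> omega
      · have hval : D' i j = D i j := by simp [hD', hp, hmi]
        rw [hval]; exact ⟨hcap i j, fun h => h, fun h => h⟩
  refine ⟨D', fun i j => (hbnd i j).1, ?_, ?_, fun i j => (hbnd i j).2.1, fun i j => (hbnd i j).2.2, ?_⟩
  · -- row sums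
    intro i
    have hsum := Finset.sum_congr rfl (fun j (_ : j ∈ univ) => key i j)
    rw [Finset.sum_add_distrib, Finset.sum_add_distrib] at hsum
    have hcnt : ∑ j, δ * (if Mi i j then 1 else 0) = ∑ j, δ * (if P i j then 1 else 0) := by
      rw [← Finset.mul_sum, ← Finset.mul_sum]
      congr 1
      rw [Finset.sum_boole, Finset.sum_boole]
      congr 1
      have e1 : univ.filter (fun j => Mi i j) = (univ.filter (fun t : Fin m => I t = i)).image (fun t => J (t+1)) := by
        ext j
        simp only [mem_filter, mem_univ, true_and, mem_image, hMi] <;> tauto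
      have e2 : univ.filter (fun j => P i j) = (univ.filter (fun t : Fin m => I t = i)).image (fun t => J t) := by
        ext j
        simp only [mem_filter, mem_univ, true_and, mem_image, hP] <;> tauto
      have hJ1 : Injective (fun t : Fin m => J (t+1)) := fun a b h => by
        have := hJ h; exact add_left_injective 1 this
      rw [e1, e2, Finset.card_image_of_injective _ hJ1,
        Finset.card_image_of_injective _ hJ]
    rw [hcnt] at hsum
    exact Nat.add_right_cancel hsum
  · -- column sums
    intro j
    have hsum := Finset.sum_congr rfl (fun i (_ : i ∈ univ) => key i j)
    rw [Finset.sum_add_distrib, Finset.sum_add_distrib] at hsum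
    have hcnt : ∑ i, δ * (if Mi i j then 1 else 0) = ∑ i, δ * (if P i j then 1 else 0) := by
      rw [← Finset.mul_sum, ← Finset.mul_sum]
      congr 1
      rw [Finset.sum_boole, Finset.sum_boole]
      congr 1
      have e1 : univ.filter (fun i => Mi i j) = (univ.filter (fun t : Fin m => J (t+1) = j)).image (fun t => I t) := by
        ext i
        simp only [mem_filter, mem_univ, true_and, mem_image, hMi] <;> tauto
      have e2 : univ.filter (fun i => P i j) = (univ.filter (fun t : Fin m => J t = j)).image (fun t => I t) := by
        ext i
        simp only [mem_filter, mem_univ, true_and, mem_image, hP] <;> tauto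
      rw [e1, e2, Finset.card_image_of_injective _ hI, Finset.card_image_of_injective _ hI]
      apply Finset.card_bij (fun t _ => t + 1)
      · intro t ht; simp only [mem_filter, mem_univ, true_and] at *; exact ht
      · intro t _ u _ h; exact add_left_injective 1 h
      · intro u hu
        refine ⟨u - 1, ?_, by simp⟩
        simp only [mem_filter, mem_univ, true_and] at *
        rwa [sub_add_cancel]
    rw [hcnt] at hsum
    exact Nat.add_right_cancel hsum
  · -- strict subset of fractional set
    constructor
    · intro p hp
      simp only [mem_filter, mem_univ, true_and] at *
      by_cases hpp : P p.1 p.2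
      · obtain ⟨t, h1, h2⟩ := hpp
        rw [← h1, ← h2]; exact hplus t
      · by_cases hmi : Mi p.1 p.2
        · obtain ⟨t, h1, h2⟩ := hmi
          rw [← h1, ← h2]; exact hminus t
        · have : D' p.1 p.2 = D p.1 p.2 := (if_neg hpp).trans (if_neg hmi)
          rwa [this] at hp
    · intro hsub
      -- find a cell that leaves the fractional set
      rcases min_choice (A.min' hAne) (B.min' hBne) with hmin | hmin
      · rcases mem_image.1 (A.min'_mem hAne) with ⟨t, -, ht⟩
        have hδval : δ = q - D (I t) (J t) := by rw [hδ, hmin, ht]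
        have hfrac : (I t, J t) ∈ univ.filter (fun p : Fin n × Fin n => 0 < D p.1 p.2 ∧ D p.1 p.2 < q) := by
          simp only [mem_filter, mem_univ, true_and]; exact hplus t
        have := hsub hfrac
        simp only [mem_filter, mem_univ, true_and] at this
        have hval : D' (I t) (J t) = D (I t) (J t) + δ := by
          have hP' : P (I t) (J t) := ⟨t, rfl, rfl⟩
          simp only [hD', if_pos hP']
        have h1 := hplus t
        rw [hval, hδval] at this
        omega
      · rcases mem_image.1 (B.min'_mem hBne) with ⟨t, -, ht⟩
        have hδval : δ = D (I t) (J (t+1)) := by rw [hδ, hmin, ht]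
        have hfrac : (I t, J (t+1)) ∈ univ.filter (fun p : Fin n × Fin n => 0 < D p.1 p.2 ∧ D p.1 p.2 < q) := by
          simp only [mem_filter, mem_univ, true_and]; exact hminus t
        have := hsub hfrac
        simp only [mem_filter, mem_univ, true_and] at this
        have hnp : ¬ P (I t) (J (t+1)) := fun h => hPM _ _ h ⟨t, rfl, rfl⟩
        have hval : D' (I t) (J (t+1)) = D (I t) (J (t+1)) - δ := by
          have hM' : Mi (I t) (J (t+1)) := ⟨t, rfl, rfl⟩
          simp only [hD', if_neg hnp, if_pos hM']
        rw [hval, hδval] at this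
        omega

/-- In a relation where every occupied row and column contains at least two cells,
    there is an alternating cycle (in one of two orientations). -/
lemma cycle_of_rel {n : ℕ} (E : Fin n → Fin n → Prop) (p0 : Fin n × Fin n) (hp0 : E p0.1 p0.2)
    (hrow : ∀ a b, E a b → ∃ b', b' ≠ b ∧ E a b')
    (hcol : ∀ a b, E a b → ∃ a', a' ≠ a ∧ E a' b) :
    ∃ m : ℕ, ∃ I J : Fin (m + 2) → Fin n, Injective I ∧ Injective J ∧
      (∀ t, E (I t) (J t)) ∧
      ((∀ t, E (I t) (J (t+1))) ∨ (∀ t, E (I (t+1)) (J t))) := by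
  classical
  have step : ∀ p : Fin n × Fin n, E p.1 p.2 →
      ∃ p' : Fin n × Fin n, E p'.1 p'.2 ∧ E p'.1 p.2 ∧ p'.1 ≠ p.1 ∧ p'.2 ≠ p.2 := by
    rintro ⟨a, b⟩ h
    obtain ⟨a', ha', hE'⟩ := hcol a b h
    obtain ⟨b', hb', hE''⟩ := hrow a' b hE'
    exact ⟨(a', b'), hE'', hE', ha', hb'⟩
  let W : ℕ → {p : Fin n × Fin n // E p.1 p.2} := fun t =>
    Nat.rec ⟨p0, hp0⟩ (fun _ prev => ⟨Classical.choose (step prev.1 prev.2),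
      (Classical.choose_spec (step prev.1 prev.2)).1⟩) t
  set R : ℕ → Fin n := fun t => (W t).1.1 with hR
  set C : ℕ → Fin n := fun t => (W t).1.2 with hC
  have hE : ∀ t, E (R t) (C t) := fun t => (W t).2
  have hstep : ∀ t, E (R (t+1)) (C t) ∧ R (t+1) ≠ R t ∧ C (t+1) ≠ C t := by
    intro t
    have h := (Classical.choose_spec (step (W t).1 (W t).2)).2
    exact ⟨h.1, h.2.1, h.2.2⟩
  have hn : 0 < n := Fin.pos_iff_nonempty.2 ⟨p0.1⟩
  have hrep : ∃ d, 0 < d ∧ ∃ a, (C a = C (a + d) ∨ R a = R (a + d)) := by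
    have hmaps : ∀ x ∈ Finset.range (n+1), C x ∈ (univ : Finset (Fin n)) :=
      fun x _ => mem_univ _
    have hcard : (univ : Finset (Fin n)).card < (Finset.range (n+1)).card := by simp
    obtain ⟨x, -, y, -, hxy, hCxy⟩ :=
      Finset.exists_ne_map_eq_of_card_lt_of_maps_to hcard hmaps
    rcases Nat.lt_or_ge x y with h | h
    · exact ⟨y - x, by omega, x, Or.inl (by rw [hCxy]; congr 1; omega)⟩
    · have : y < x := by omega
      exact ⟨x - y, by omega, y, Or.inl (by rw [← hCxy]; congr 1; omega)⟩
  obtain ⟨hd0pos, a0, hclose⟩ := Nat.find_spec hrep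
  have hmin : ∀ x y, x < y → (C x = C y ∨ R x = R y) → Nat.find hrep ≤ y - x := by
    intro x y hxy h
    apply Nat.find_min' hrep
    refine ⟨by omega, x, ?_⟩
    have hx : x + (y - x) = y := by omega
    rw [hx]; exact h
  have hm2 : 2 ≤ Nat.find hrep := by
    by_contra hlt
    push_neg at hlt
    have h1 : Nat.find hrep = 1 := by omega
    rw [h1] at hclose
    rcases hclose with h2 | h2
    · exact (hstep a0).2.2 h2.symm
    · exact (hstep a0).2.1 h2.symm
  obtain ⟨m', hm'⟩ : ∃ m', Nat.find hrep = m' + 2 := ⟨Nat.find hrep - 2, by omega⟩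
  rw [hm'] at hclose
  have hCdist : ∀ x y, x < y → y - x < m' + 2 → C x ≠ C y := by
    intro x y hxy h hc
    have := hmin x y hxy (Or.inl hc); omega
  have hRdist : ∀ x y, x < y → y - x < m' + 2 → R x ≠ R y := by
    intro x y hxy h hc
    have := hmin x y hxy (Or.inr hc); omega
  have injhelp : ∀ (f : ℕ → Fin n) (b : ℕ),
      (∀ x y, x < y → y - x < m' + 2 → f x ≠ f y) →
      Injective (fun u : Fin (m' + 2) => f (b + u.1)) := by
    intro f b hf u v h
    by_contra hne
    rcases Nat.lt_or_ge u.1 v.1 with hlt | hge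
    · exact hf (b+u.1) (b+v.1) (by omega) (by have := v.2; omega) h
    · have hlt : v.1 < u.1 := by
        rcases Nat.lt_or_ge v.1 u.1 with h' | h'
        · exact h'
        · exact absurd (Fin.ext (by omega : u.1 = v.1)) hne
      exact hf (b+v.1) (b+u.1) (by omega) (by have := u.2; omega) h.symm
  have hval1 : ∀ u : Fin (m' + 2), u.1 + 1 < m' + 2 → ((u + 1 : Fin (m' + 2)) : ℕ) = u.1 + 1 := by
    intro u h
    rw [Fin.val_add, Fin.val_one', Nat.mod_eq_of_lt (show 1 < m' + 2 by omega),
      Nat.mod_eq_of_lt (by omega)]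
  have hval0 : ∀ u : Fin (m' + 2), u.1 = m' + 1 → ((u + 1 : Fin (m' + 2)) : ℕ) = 0 := by
    intro u h
    rw [Fin.val_add, Fin.val_one', Nat.mod_eq_of_lt (show 1 < m' + 2 by omega), h]
    have : m' + 1 + 1 = m' + 2 := by omega
    rw [this, Nat.mod_self]
  rcases hclose with hcl | hcl
  · -- column closure
    refine ⟨m', fun u => R (a0 + 1 + u.1), fun u => C (a0 + u.1), ?_, ?_, ?_, Or.inl ?_⟩
    · exact injhelp R (a0 + 1) hRdist
    · exact injhelp C a0 hCdist
    · intro u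
      show E (R (a0 + 1 + u.1)) (C (a0 + u.1))
      have he : a0 + 1 + u.1 = a0 + u.1 + 1 := by ring
      rw [he]
      exact (hstep (a0 + u.1)).1
    · intro u
      show E (R (a0 + 1 + u.1)) (C (a0 + ((u + 1 : Fin (m' + 2))).1))
      rcases Nat.lt_or_ge (u.1 + 1) (m' + 2) with h | h
      · rw [hval1 u h]
        have he : a0 + (u.1 + 1) = a0 + u.1 + 1 := by ring
        rw [he]
        have he2 : a0 + 1 + u.1 = a0 + u.1 + 1 := by ring
        rw [he2]
        exact hE (a0 + u.1 + 1)
      · have hu : u.1 = m' + 1 := by have := u.2; omega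
        rw [hval0 u hu, hu]
        have h1 : a0 + 1 + (m' + 1) = a0 + (m' + 2) := by omega
        rw [h1]
        have h2 : C (a0 + 0) = C (a0 + (m' + 2)) := by rw [Nat.add_zero]; exact hcl
        rw [h2]
        exact hE (a0 + (m' + 2))
  · -- row closure
    refine ⟨m', fun u => R (a0 + u.1), fun u => C (a0 + u.1), ?_, ?_, ?_, Or.inr ?_⟩
    · exact injhelp R a0 hRdist
    · exact injhelp C a0 hCdist
    · intro u
      exact hE (a0 + u.1)
    · intro u
      show E (R (a0 + ((u + 1 : Fin (m' + 2))).1)) (C (a0 + u.1))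
      rcases Nat.lt_or_ge (u.1 + 1) (m' + 2) with h | h
      · rw [hval1 u h]
        have he : a0 + (u.1 + 1) = a0 + u.1 + 1 := by ring
        rw [he]
        exact (hstep (a0 + u.1)).1
      · have hu : u.1 = m' + 1 := by have := u.2; omega
        rw [hval0 u hu, hu]
        have h2 : R (a0 + 0) = R (a0 + (m' + 2)) := by rw [Nat.add_zero]; exact hcl
        rw [h2]
        have h1 : a0 + (m' + 2) = (a0 + (m' + 1)) + 1 := by omega
        rw [h1]
        exact (hstep (a0 + (m' + 1))).1

/-- Helper: a line of sum divisible by `q` with a fractional entry has another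
fractional entry. -/
lemma second_frac {n q L : ℕ} (f : Fin n → ℕ) (hcap : ∀ j, f j ≤ q)
    (hsum : ∑ j, f j = q * L) {b : Fin n} (hb : 0 < f b ∧ f b < q) :
    ∃ b', b' ≠ b ∧ (0 < f b' ∧ f b' < q) := by
  classical
  by_contra h
  push_neg at h
  have hdvd : ∀ b' ∈ univ.erase b, q ∣ f b' := by
    intro b' hb'
    have hne : b' ≠ b := (mem_erase.1 hb').1
    have hcapb := hcap b'
    rcases Nat.eq_zero_or_pos (f b') with h0 | h0
    · simp [h0]
    · have hge := h b' hne h0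
      have : f b' = q := by omega
      simp [this]
  have hsum' : ∑ b' ∈ univ.erase b, f b' + f b = q * L := by
    rw [Finset.sum_erase_add _ _ (mem_univ b)]; exact hsum
  have hdvdsum : q ∣ ∑ b' ∈ univ.erase b, f b' := Finset.dvd_sum hdvd
  have : q ∣ f b := by
    have h1 : f b = q * L - ∑ b' ∈ univ.erase b, f b' := by omega
    rw [h1]
    exact Nat.dvd_sub ⟨L, rfl⟩ hdvdsum
  have := Nat.le_of_dvd hb.1 this
  omega

/-- The extraction (rounding) lemma. -/
lemma extract {n q L : ℕ} (hq : 1 ≤ q) (D : Fin n → Fin n → ℕ)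
    (hcap : ∀ i j, D i j ≤ q) (hrow : ∀ i, ∑ j, D i j = q * L)
    (hcol : ∀ j, ∑ i, D i j = q * L) :
    ∃ x : Fin n → Fin n → ℕ, (∀ i j, x i j ≤ 1) ∧ (∀ i j, x i j ≤ D i j) ∧
      (∀ i j, D i j = q → x i j = 1) ∧ (∀ i, ∑ j, x i j = L) ∧ (∀ j, ∑ i, x i j = L) := by
  classical
  suffices H : ∀ (N : ℕ) (D : Fin n → Fin n → ℕ),
      (univ.filter (fun p : Fin n × Fin n => 0 < D p.1 p.2 ∧ D p.1 p.2 < q)).card ≤ N →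
      (∀ i j, D i j ≤ q) → (∀ i, ∑ j, D i j = q * L) → (∀ j, ∑ i, D i j = q * L) →
      ∃ x : Fin n → Fin n → ℕ, (∀ i j, x i j ≤ 1) ∧ (∀ i j, x i j ≤ D i j) ∧
        (∀ i j, D i j = q → x i j = 1) ∧ (∀ i, ∑ j, x i j = L) ∧ (∀ j, ∑ i, x i j = L) by
    exact H _ D le_rfl hcap hrow hcol
  intro N
  induction N with
  | zero =>
    intro D hcard hcap hrow hcol
    have hempty : ∀ i j, D i j = 0 ∨ D i j = q := by
      intro i j
      by_contra h
      push_neg at h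
      have hfr : 0 < D i j ∧ D i j < q := by have := hcap i j; omega
      have : (i, j) ∈ univ.filter (fun p : Fin n × Fin n => 0 < D p.1 p.2 ∧ D p.1 p.2 < q) := by
        simp only [mem_filter, mem_univ, true_and]; exact hfr
      have := Finset.card_pos.2 ⟨_, this⟩
      omega
    refine ⟨fun i j => D i j / q, ?_, ?_, ?_, ?_, ?_⟩
    · intro i j
      rcases hempty i j with h | h <;> simp [h, Nat.div_self (by omega : 0 < q)]
    · intro i j
      exact Nat.div_le_self _ _
    · intro i j h
      show D i j / q = 1
      rw [h, Nat.div_self (by omega : 0 < q)]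
    · intro i
      have : q * ∑ j, D i j / q = q * L := by
        rw [Finset.mul_sum]
        rw [← hrow i]
        apply Finset.sum_congr rfl
        intro j _
        rcases hempty i j with h | h <;> simp [h, Nat.div_self (by omega : 0 < q)]
      exact Nat.eq_of_mul_eq_mul_left (by omega) this
    · intro j
      have : q * ∑ i, D i j / q = q * L := by
        rw [Finset.mul_sum]
        rw [← hcol j]
        apply Finset.sum_congr rfl
        intro i _
        rcases hempty i j with h | h <;> simp [h, Nat.div_self (by omega : 0 < q)]
      exact Nat.eq_of_mul_eq_mul_left (by omega) this
  | succ N ih =>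
    intro D hcard hcap hrow hcol
    by_cases hc : (univ.filter (fun p : Fin n × Fin n => 0 < D p.1 p.2 ∧ D p.1 p.2 < q)).card ≤ N
    · exact ih D hc hcap hrow hcol
    · have hpos : 0 < (univ.filter (fun p : Fin n × Fin n => 0 < D p.1 p.2 ∧ D p.1 p.2 < q)).card := by omega
      obtain ⟨p0, hp0⟩ := Finset.card_pos.1 hpos
      simp only [mem_filter, mem_univ, true_and] at hp0
      set E : Fin n → Fin n → Prop := fun a b => 0 < D a b ∧ D a b < q with hEdef
      have hrow2 : ∀ a b, E a b → ∃ b', b' ≠ b ∧ E a b' := by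
        intro a b hab
        exact second_frac (f := fun j => D a j) (fun j => hcap a j) (hrow a) hab
      have hcol2 : ∀ a b, E a b → ∃ a', a' ≠ a ∧ E a' b := by
        intro a b hab
        exact second_frac (f := fun i => D i b) (fun i => hcap i b) (hcol b) hab
      obtain ⟨m', I, J, hI, hJ, hplus, hor⟩ := cycle_of_rel E p0 hp0 hrow2 hcol2
      have hpush : ∃ D' : Fin n → Fin n → ℕ, (∀ i j, D' i j ≤ q) ∧
          (∀ i, ∑ j, D' i j = q * L) ∧ (∀ j, ∑ i, D' i j = q * L) ∧
          (∀ i j, D i j = 0 → D' i j = 0) ∧ (∀ i j, D i j = q → D' i j = q) ∧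
          (univ.filter (fun p : Fin n × Fin n => 0 < D' p.1 p.2 ∧ D' p.1 p.2 < q)).card <
            (univ.filter (fun p : Fin n × Fin n => 0 < D p.1 p.2 ∧ D p.1 p.2 < q)).card := by
        rcases hor with hminus | hminus
        · obtain ⟨D', h1, h2, h3, h4, h5, h6⟩ :=
            push_cycle (m := m' + 2) (by omega) D hcap I J hI hJ hplus hminus
          refine ⟨D', h1, ?_, ?_, h4, h5, Finset.card_lt_card h6⟩
          · intro i; rw [h2 i]; exact hrow i
          · intro j; rw [h3 j]; exact hcol j
        · -- transpose case
          obtain ⟨D'', h1, h2, h3, h4, h5, h6⟩ :=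
            push_cycle (m := m' + 2) (by omega) (fun a b => D b a)
              (fun b a => hcap a b) J I hJ hI
              (fun t => hplus t) (fun t => hminus t)
          refine ⟨fun i j => D'' j i, fun i j => h1 j i, ?_, ?_,
            fun i j h => h4 j i h, fun i j h => h5 j i h, ?_⟩
          · intro i; rw [h3 i]; exact hrow i
          · intro j; rw [h2 j]; exact hcol j
          · have hlt := Finset.card_lt_card h6
            have e1 : (univ.filter (fun p : Fin n × Fin n => 0 < D'' p.2 p.1 ∧ D'' p.2 p.1 < q)).card =
                (univ.filter (fun p : Fin n × Fin n => 0 < D'' p.1 p.2 ∧ D'' p.1 p.2 < q)).card := by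
              apply Finset.card_bij (fun p _ => p.swap)
              · intro p hp; simp only [mem_filter, mem_univ, true_and] at *; exact hp
              · intro p _ p' _ h; exact Prod.swap_injective h
              · intro p hp; exact ⟨p.swap, by simp only [mem_filter, mem_univ, true_and] at *; exact hp, by simp⟩
            have e2 : (univ.filter (fun p : Fin n × Fin n => 0 < D p.2 p.1 ∧ D p.2 p.1 < q)).card =
                (univ.filter (fun p : Fin n × Fin n => 0 < D p.1 p.2 ∧ D p.1 p.2 < q)).card := by
              apply Finset.card_bij (fun p _ => p.swap)
              · intro p hp; simp only [mem_filter, mem_univ, true_and] at *; exact hp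
              · intro p _ p' _ h; exact Prod.swap_injective h
              · intro p hp; exact ⟨p.swap, by simp only [mem_filter, mem_univ, true_and] at *; exact hp, by simp⟩
            exact lt_of_le_of_lt (le_of_eq e1) (lt_of_lt_of_le hlt (le_of_eq e2))
      obtain ⟨D', hcap', hrow', hcol', hzero', hq', hlt⟩ := hpush
      obtain ⟨x, hx1, hx2, hx3, hx4, hx5⟩ := ih D' (by omega) hcap' hrow' hcol'
      refine ⟨x, hx1, ?_, ?_, hx4, hx5⟩
      · intro i j
        rcases Nat.eq_zero_or_pos (D i j) with h0 | h0
        · rw [h0]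
          have := hzero' i j h0
          have := hx2 i j
          omega
        · have := hx1 i j; omega
      · intro i j h
        exact hx3 i j (hq' i j h)

/-- Decompose a matrix with caps `q` and line sums `q*L` into `q` 0-1 matrices
with line sums `L`. -/
lemma decomp {n : ℕ} (q L : ℕ) (D : Fin n → Fin n → ℕ)
    (hcap : ∀ i j, D i j ≤ q) (hrow : ∀ i, ∑ j, D i j = q * L)
    (hcol : ∀ j, ∑ i, D i j = q * L) :
    ∃ x : Fin q → Fin n → Fin n → ℕ,
      (∀ c i j, x c i j ≤ 1) ∧ (∀ c i, ∑ j, x c i j = L) ∧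
      (∀ c j, ∑ i, x c i j = L) ∧ (∀ i j, ∑ c, x c i j = D i j) := by
  induction q generalizing D with
  | zero =>
    refine ⟨fun c => c.elim0, fun c => c.elim0, fun c => c.elim0, fun c => c.elim0, ?_⟩
    intro i j
    have := hcap i j
    simp only [Finset.univ_eq_empty, Finset.sum_empty]
    omega
  | succ q ih =>
    obtain ⟨x0, hx1, hx2, hx3, hx4, hx5⟩ :=
      extract (q := q + 1) (L := L) (by omega) D hcap hrow hcol
    set D' : Fin n → Fin n → ℕ := fun i j => D i j - x0 i j with hD'
    have hcap' : ∀ i j, D' i j ≤ q := by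
      intro i j
      by_cases h : D i j = q + 1
      · have := hx3 i j h
        simp only [hD']
        omega
      · have := hcap i j
        have := hx2 i j
        simp only [hD']
        omega
    have hql : (q+1) * L = q * L + L := by ring
    have hrow' : ∀ i, ∑ j, D' i j = q * L := by
      intro i
      have hs : ∑ j, D' i j + ∑ j, x0 i j = ∑ j, D i j := by
        rw [← Finset.sum_add_distrib]
        apply Finset.sum_congr rfl
        intro j _
        have := hx2 i j
        simp only [hD']
        omega
      have h1 := hrow i
      have h2 := hx4 i
      omega
    have hcol' : ∀ j, ∑ i, D' i j = q * L := by
      intro j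
      have hs : ∑ i, D' i j + ∑ i, x0 i j = ∑ i, D i j := by
        rw [← Finset.sum_add_distrib]
        apply Finset.sum_congr rfl
        intro i _
        have := hx2 i j
        simp only [hD']
        omega
      have h1 := hcol j
      have h2 := hx5 j
      omega
    obtain ⟨xs, hxs1, hxs2, hxs3, hxs4⟩ := ih D' hcap' hrow' hcol'
    refine ⟨Fin.cons x0 xs, ?_, ?_, ?_, ?_⟩
    · intro c
      refine Fin.cases ?_ ?_ c
      · simpa using hx1
      · intro c'; simpa using hxs1 c'
    · intro c
      refine Fin.cases ?_ ?_ c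
      · simpa using hx4
      · intro c'; simpa using hxs2 c'
    · intro c
      refine Fin.cases ?_ ?_ c
      · simpa using hx5
      · intro c'; simpa using hxs3 c'
    · intro i j
      rw [Fin.sum_univ_succ]
      simp only [Fin.cons_zero, Fin.cons_succ]
      rw [hxs4 i j]
      have := hx2 i j
      simp only [hD']
      omega

/-- For λ ≤ k and n ≥ max(k+r, k+s, k+λ, r+s), any simple partial r×s λ-Latin
rectangle on [k] extends to a simple n×n λ-Latin square on [n]. -/
theorem stmt6 (r s n k L : ℕ) (hL : 1 ≤ L) (hLk : L ≤ k)
    (h1 : k + r ≤ n) (h2 : k + s ≤ n) (h3 : k + L ≤ n) (h4 : r + s ≤ n)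
    (M : Fin r → Fin s → Fin k → ℕ)
    (hMcell : ∀ i j, ∑ ℓ, M i j ℓ ≤ L)
    (hMrow : ∀ i ℓ, ∑ j, M i j ℓ ≤ L)
    (hMcol : ∀ j ℓ, ∑ i, M i j ℓ ≤ L)
    (hMsimple : ∀ i j ℓ, M i j ℓ ≤ 1) :
    ∃ N : Fin n → Fin n → Fin n → ℕ,
      (∀ i j, ∑ ℓ, N i j ℓ = L) ∧
      (∀ i ℓ, ∑ j, N i j ℓ = L) ∧
      (∀ j ℓ, ∑ i, N i j ℓ = L) ∧
      (∀ i j ℓ, N i j ℓ ≤ 1) ∧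
      (∀ i j ℓ, M i j ℓ ≤
        N (Fin.castLE (by omega) i) (Fin.castLE (by omega) j) (Fin.castLE (by omega) ℓ)) := by
  classical
  -- ℕ-indexed copy of M
  set Mn : ℕ → ℕ → ℕ → ℕ := fun i j ℓ =>
    if h : i < r ∧ j < s ∧ ℓ < k then M ⟨i, h.1⟩ ⟨j, h.2.1⟩ ⟨ℓ, h.2.2⟩ else 0 with hMndef
  set mc : ℕ → ℕ → ℕ := fun i j => ∑ ℓ ∈ Finset.range k, Mn i j ℓ with hmcdef
  have hMn1 : ∀ i j ℓ, Mn i j ℓ ≤ 1 := by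
    intro i j ℓ
    simp only [hMndef]
    split
    · exact hMsimple _ _ _
    · omega
  have hmcL : ∀ i j, mc i j ≤ L := by
    intro i j
    simp only [hmcdef]
    by_cases h : i < r ∧ j < s
    · calc ∑ ℓ ∈ Finset.range k, Mn i j ℓ
          = ∑ ℓ : Fin k, M ⟨i, h.1⟩ ⟨j, h.2⟩ ℓ := by
            rw [← Fin.sum_univ_eq_sum_range (fun ℓ => Mn i j ℓ) k]
            apply Finset.sum_congr rfl
            intro ℓ _
            simp only [hMndef]
            rw [dif_pos ⟨h.1, h.2, ℓ.2⟩]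
        _ ≤ L := hMcell _ _
    · have : ∀ ℓ ∈ Finset.range k, Mn i j ℓ = 0 := by
        intro ℓ _
        simp only [hMndef]
        rw [dif_neg (by tauto)]
      rw [Finset.sum_congr rfl this]
      simp
  have hMnrow : ∀ i ℓ, ∑ j ∈ Finset.range s, Mn i j ℓ ≤ L := by
    intro i ℓ
    by_cases h : i < r ∧ ℓ < k
    · calc ∑ j ∈ Finset.range s, Mn i j ℓ
          = ∑ j : Fin s, M ⟨i, h.1⟩ j ⟨ℓ, h.2⟩ := by
            rw [← Fin.sum_univ_eq_sum_range (fun j => Mn i j ℓ) s]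
            apply Finset.sum_congr rfl
            intro j _
            simp only [hMndef]
            rw [dif_pos ⟨h.1, j.2, h.2⟩]
        _ ≤ L := hMrow _ _
    · have : ∀ j ∈ Finset.range s, Mn i j ℓ = 0 := by
        intro j _
        simp only [hMndef]
        rw [dif_neg (by tauto)]
      rw [Finset.sum_congr rfl this]
      simp
  have hMncol : ∀ j ℓ, ∑ i ∈ Finset.range r, Mn i j ℓ ≤ L := by
    intro j ℓ
    by_cases h : j < s ∧ ℓ < k
    · calc ∑ i ∈ Finset.range r, Mn i j ℓ
          = ∑ i : Fin r, M i ⟨j, h.1⟩ ⟨ℓ, h.2⟩ := by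
            rw [← Fin.sum_univ_eq_sum_range (fun i => Mn i j ℓ) r]
            apply Finset.sum_congr rfl
            intro i _
            simp only [hMndef]
            rw [dif_pos ⟨i.2, h.1, h.2⟩]
        _ ≤ L := hMcol _ _
    · have : ∀ i ∈ Finset.range r, Mn i j ℓ = 0 := by
        intro i _
        simp only [hMndef]
        rw [dif_neg (by tauto)]
      rw [Finset.sum_congr rfl this]
      simp
  -- Phase 1 : fill cells of the r×s block with fillers from [k, n)
  set F : ℕ → ℕ → ℕ → ℕ := fun i j σ =>
    if σ < k then Mn i j σ
    else if (∃ t, t < L - mc i j ∧ (i + j + t) % (n - k) = σ - k) then 1 else 0 with hFdef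
  have hnk : L ≤ n - k ∧ s ≤ n - k ∧ r ≤ n - k := by omega
  have hF1 : ∀ i j σ, F i j σ ≤ 1 := by
    intro i j σ
    simp only [hFdef]
    split
    · exact hMn1 _ _ _
    · split <;> omega
  have hFM : ∀ i j σ, σ < k → F i j σ = Mn i j σ := by
    intro i j σ h
    simp only [hFdef]
    rw [if_pos h]
  have hmodinj : ∀ b t t', t < n - k → t' < n - k →
      (b + t) % (n - k) = (b + t') % (n - k) → t = t' := by
    intro b t t' ht ht' h
    have h2 := Nat.ModEq.add_left_cancel' b (h : Nat.ModEq (n-k) (b+t) (b+t'))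
    have h3 : t % (n-k) = t' % (n-k) := h2
    rwa [Nat.mod_eq_of_lt ht, Nat.mod_eq_of_lt ht'] at h3
  have hFcell : ∀ i j, ∑ σ ∈ Finset.range n, F i j σ = L := by
    intro i j
    have hsplit : ∑ σ ∈ Finset.range k, F i j σ + ∑ σ ∈ Finset.Ico k n, F i j σ
        = ∑ σ ∈ Finset.range n, F i j σ :=
      Finset.sum_range_add_sum_Ico _ (by omega)
    have e1 : ∑ σ ∈ Finset.range k, F i j σ = mc i j := by
      rw [hmcdef]
      apply Finset.sum_congr rfl
      intro σ hσ
      exact hFM i j σ (Finset.mem_range.1 hσ)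
    have e2 : ∑ σ ∈ Finset.Ico k n, F i j σ = L - mc i j := by
      rw [Finset.sum_Ico_eq_sum_range]
      have hcong : ∀ c ∈ Finset.range (n - k), F i j (k + c) =
          if (∃ t, t < L - mc i j ∧ (i + j + t) % (n - k) = c) then 1 else 0 := by
        intro c hc
        simp only [hFdef]
        rw [if_neg (by omega)]
        have : k + c - k = c := by omega
        rw [this]
      rw [Finset.sum_congr rfl hcong, ← Finset.card_filter]
      have himg : (Finset.range (n-k)).filter
            (fun c => ∃ t, t < L - mc i j ∧ (i+j+t) % (n-k) = c)
          = (Finset.range (L - mc i j)).image (fun t => (i + j + t) % (n - k)) := by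
        ext c
        simp only [Finset.mem_filter, Finset.mem_range, Finset.mem_image]
        constructor
        · rintro ⟨hc, t, ht, hmod⟩
          exact ⟨t, ht, hmod⟩
        · rintro ⟨t, ht, hmod⟩
          refine ⟨?_, t, ht, hmod⟩
          rw [← hmod]
          exact Nat.mod_lt _ (by omega)
      rw [himg, Finset.card_image_of_injOn, Finset.card_range]
      intro t ht t' ht' h
      simp only [Finset.coe_range, Set.mem_Iio] at ht ht'
      have hmcl := hmcL i j
      exact hmodinj (i+j) t t' (by omega) (by omega) h
    have := hmcL i j
    omega
  have hFrow : ∀ i σ, ∑ j ∈ Finset.range s, F i j σ ≤ L := by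
    intro i σ
    by_cases hσ : σ < k
    · calc ∑ j ∈ Finset.range s, F i j σ = ∑ j ∈ Finset.range s, Mn i j σ :=
          Finset.sum_congr rfl (fun j _ => hFM i j σ hσ)
        _ ≤ L := hMnrow i σ
    · have e1 : ∑ j ∈ Finset.range s, F i j σ = ((Finset.range s).filter
          (fun j => ∃ t, t < L - mc i j ∧ (i+j+t) % (n-k) = σ - k)).card := by
        rw [Finset.card_filter]
        apply Finset.sum_congr rfl
        intro j hj
        simp only [hFdef]
        rw [if_neg hσ]
      rw [e1]
      have e2 : ((Finset.range s).filter
          (fun j => ∃ t, t < L - mc i j ∧ (i+j+t) % (n-k) = σ - k)).card ≤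
          (Finset.range L).card := by
        apply Finset.card_le_card_of_injOn
          (fun j => if h : ∃ t, t < L - mc i j ∧ (i+j+t) % (n-k) = σ - k then Nat.find h else 0)
        · intro j hj
          simp only [Finset.mem_coe, Finset.mem_filter] at hj
          beta_reduce
          rw [dif_pos hj.2]
          have hspec := Nat.find_spec hj.2
          have := hmcL i j
          simp only [Finset.mem_coe, Finset.mem_range]
          omega
        · intro j hj j' hj' heq
          simp only [Finset.coe_filter, Finset.mem_range, Set.mem_setOf_eq] at hj hj'
          beta_reduce at heq
          rw [dif_pos hj.2, dif_pos hj'.2] at heq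
          have h1 := Nat.find_spec hj.2
          have h2 := Nat.find_spec hj'.2
          rw [heq] at h1
          apply hmodinj (i + Nat.find hj'.2) j j' (by omega) (by omega)
          rw [show i + Nat.find hj'.2 + j = i + j + Nat.find hj'.2 from by ring,
            show i + Nat.find hj'.2 + j' = i + j' + Nat.find hj'.2 from by ring,
            h1.2, h2.2]
      rw [Finset.card_range] at e2
      exact e2
  have hFcol : ∀ j σ, ∑ i ∈ Finset.range r, F i j σ ≤ L := by
    intro j σ
    by_cases hσ : σ < k
    · calc ∑ i ∈ Finset.range r, F i j σ = ∑ i ∈ Finset.range r, Mn i j σ :=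
          Finset.sum_congr rfl (fun i _ => hFM i j σ hσ)
        _ ≤ L := hMncol j σ
    · have e1 : ∑ i ∈ Finset.range r, F i j σ = ((Finset.range r).filter
          (fun i => ∃ t, t < L - mc i j ∧ (i+j+t) % (n-k) = σ - k)).card := by
        rw [Finset.card_filter]
        apply Finset.sum_congr rfl
        intro i hi
        simp only [hFdef]
        rw [if_neg hσ]
      rw [e1]
      have e2 : ((Finset.range r).filter
          (fun i => ∃ t, t < L - mc i j ∧ (i+j+t) % (n-k) = σ - k)).card ≤
          (Finset.range L).card := by
        apply Finset.card_le_card_of_injOn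
          (fun i => if h : ∃ t, t < L - mc i j ∧ (i+j+t) % (n-k) = σ - k then Nat.find h else 0)
        · intro i hi
          simp only [Finset.mem_coe, Finset.mem_filter] at hi
          beta_reduce
          rw [dif_pos hi.2]
          have hspec := Nat.find_spec hi.2
          have := hmcL i j
          simp only [Finset.mem_coe, Finset.mem_range]
          omega
        · intro i hi i' hi' heq
          simp only [Finset.coe_filter, Finset.mem_range, Set.mem_setOf_eq] at hi hi'
          beta_reduce at heq
          rw [dif_pos hi.2, dif_pos hi'.2] at heq
          have h1 := Nat.find_spec hi.2
          have h2 := Nat.find_spec hi'.2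
          rw [heq] at h1
          apply hmodinj (j + Nat.find hi'.2) i i' (by omega) (by omega)
          rw [show j + Nat.find hi'.2 + i = i + j + Nat.find hi'.2 from by ring,
            show j + Nat.find hi'.2 + i' = i' + j + Nat.find hi'.2 from by ring,
            h1.2, h2.2]
      rw [Finset.card_range] at e2
      exact e2
  -- Phase 2 : row counts and padding matrix
  set ρ : ℕ → ℕ → ℕ := fun i σ => ∑ j ∈ Finset.range s, F i j σ with hρdef
  have hρL : ∀ i σ, ρ i σ ≤ L := fun i σ => hFrow i σ
  have hρsum : ∀ i, ∑ σ ∈ Finset.range n, ρ i σ = s * L := by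
    intro i
    simp only [hρdef]
    rw [Finset.sum_comm]
    rw [Finset.sum_congr rfl (fun j _ => hFcell i j)]
    simp [mul_comm]
  set focc : ℕ → ℕ := fun σ => ∑ i ∈ Finset.range r, ρ i σ with hfdef
  have hfle : ∀ σ, focc σ ≤ r * L := by
    intro σ
    simp only [hfdef]
    calc ∑ i ∈ Finset.range r, ρ i σ ≤ ∑ _i ∈ Finset.range r, L :=
        Finset.sum_le_sum (fun i _ => hρL i σ)
      _ = r * L := by simp [mul_comm]
  have hfsum : ∑ σ ∈ Finset.range n, focc σ = r * (s * L) := by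
    simp only [hfdef]
    rw [Finset.sum_comm]
    rw [Finset.sum_congr rfl (fun i _ => hρsum i)]
    simp [mul_comm]
  set tdef : ℕ → ℕ := fun σ => (n - s - r) * L + focc σ with htdef
  have htle : ∀ σ, tdef σ ≤ (n - s) * L := by
    intro σ
    have h5 := hfle σ
    simp only [htdef]
    calc (n - s - r) * L + focc σ ≤ (n - s - r) * L + r * L := by omega
      _ = ((n - s - r) + r) * L := by rw [add_mul]
      _ = (n - s) * L := by congr 1; omega
  set pref : ℕ → ℕ := fun σ => ∑ σ' ∈ Finset.range σ, tdef σ' with hprefdef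
  have hprefsucc : ∀ σ, pref (σ+1) = pref σ + tdef σ := by
    intro σ
    simp only [hprefdef]
    rw [Finset.sum_range_succ]
  set T : ℕ → ℕ → ℕ := fun a σ =>
    ((Finset.Ico (pref σ) (pref (σ+1))).filter (fun w => w % (n - r) = a)).card with hTdef
  have hnr : 0 < n - r ∧ L ≤ n - r ∧ r ≤ n - s ∧ L ≤ n - s ∧ 0 < n - s := by omega
  have hTcol : ∀ σ, ∑ a ∈ Finset.range (n - r), T a σ = tdef σ := by
    intro σ
    simp only [hTdef]
    rw [← Finset.card_eq_sum_card_fiberwise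
      (fun w _ => Finset.mem_range.2 (Nat.mod_lt w hnr.1))]
    rw [Nat.card_Ico, hprefsucc σ]
    omega
  have hcount : ∀ (m Q a : ℕ), 0 < m → a < m →
      ((Finset.Ico 0 (m * Q)).filter (fun w => w % m = a)).card = Q := by
    intro m Q a hm ha
    have himg : (Finset.Ico 0 (m*Q)).filter (fun w => w % m = a)
        = (Finset.range Q).image (fun u => a + u * m) := by
      ext w
      simp only [Finset.mem_filter, Finset.mem_Ico, Finset.mem_image, Finset.mem_range,
        Nat.zero_le, true_and]
      constructor
      · rintro ⟨hw, hmod⟩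
        refine ⟨w / m, ?_, ?_⟩
        · exact Nat.div_lt_of_lt_mul hw
        · rw [← hmod, Nat.mod_add_div']
      · rintro ⟨u, hu, rfl⟩
        constructor
        · calc a + u * m < m + u * m := by omega
            _ = (u + 1) * m := by ring
            _ ≤ Q * m := Nat.mul_le_mul_right m (by omega)
            _ = m * Q := by ring
        · rw [Nat.add_mul_mod_self_right, Nat.mod_eq_of_lt ha]
    rw [himg, Finset.card_image_of_injOn, Finset.card_range]
    intro u _ u' _ h
    beta_reduce at h
    have : u * m = u' * m := by omega
    exact Nat.eq_of_mul_eq_mul_right hm this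
  have hTrow : ∀ a, a < n - r → ∑ σ ∈ Finset.range n, T a σ = (n - s) * L := by
    intro a ha
    have hchunk : ∀ N, ∑ σ ∈ Finset.range N, T a σ =
        ((Finset.Ico 0 (pref N)).filter (fun w => w % (n-r) = a)).card := by
      intro N
      induction N with
      | zero =>
        simp only [Finset.sum_range_zero, hprefdef, Finset.range_zero, Finset.sum_empty]
        simp
      | succ N ihN =>
        rw [Finset.sum_range_succ, ihN]
        simp only [hTdef]
        rw [← Finset.card_union_of_disjoint, ← Finset.filter_union]
        · congr 1
          rw [Finset.Ico_union_Ico_eq_Ico (Nat.zero_le _)]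
          rw [hprefsucc N]
          omega
        · apply Finset.disjoint_filter_filter
          apply Finset.Ico_disjoint_Ico_consecutive
    have hprefn : pref n = (n - r) * ((n - s) * L) := by
      simp only [hprefdef, htdef]
      rw [Finset.sum_add_distrib, Finset.sum_const, hfsum, Finset.card_range, smul_eq_mul]
      obtain ⟨c, hc⟩ : ∃ c, n = r + s + c := ⟨n - r - s, by omega⟩
      rw [hc]
      have e1 : r + s + c - s - r = c := by omega
      have e2 : r + s + c - r = s + c := by omega
      have e3 : r + s + c - s = r + c := by omega
      rw [e1, e2, e3]
      ring
    rw [hchunk n, hprefn, hcount (n-r) ((n-s)*L) a hnr.1 ha]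
  have hTcap : ∀ a σ, T a σ ≤ n - s := by
    intro a σ
    simp only [hTdef]
    have hstep : ∀ w ∈ Finset.Ico (pref σ) (pref (σ+1)), w - pref σ < tdef σ := by
      intro w hw
      rw [Finset.mem_Ico, hprefsucc σ] at hw
      omega
    calc ((Finset.Ico (pref σ) (pref (σ+1))).filter (fun w => w % (n - r) = a)).card
        ≤ (Finset.range (n - s)).card := by
          apply Finset.card_le_card_of_injOn (fun w => (w - pref σ) / (n - r))
          · intro w hw
            rw [Finset.mem_coe, Finset.mem_filter] at hw
            have h5 := hstep w hw.1
            rw [Finset.mem_coe, Finset.mem_range]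
            apply Nat.div_lt_of_lt_mul
            calc w - pref σ < tdef σ := h5
              _ ≤ (n - s) * L := htle σ
              _ ≤ (n - s) * (n - r) := Nat.mul_le_mul_left _ hnr.2.1
              _ = (n - r) * (n - s) := by ring
          · intro w hw w' hw' heq
            simp only [Finset.coe_filter, Finset.mem_Ico, Set.mem_setOf_eq] at hw hw'
            have hx : (w - pref σ) % (n - r) = (w' - pref σ) % (n - r) := by
              have hmw : (pref σ + (w - pref σ)) % (n-r) = (pref σ + (w' - pref σ)) % (n-r) := by
                rw [Nat.add_sub_cancel' hw.1.1, Nat.add_sub_cancel' hw'.1.1, hw.2, hw'.2]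
              exact Nat.ModEq.add_left_cancel' (pref σ)
                (hmw : Nat.ModEq (n-r) (pref σ + (w - pref σ)) (pref σ + (w' - pref σ)))
            beta_reduce at heq
            have h6 : w - pref σ = w' - pref σ := by
              have d1 := Nat.div_add_mod (w - pref σ) (n - r)
              have d2 := Nat.div_add_mod (w' - pref σ) (n - r)
              rw [heq, hx] at d1
              omega
            omega
      _ = n - s := Finset.card_range _
  -- the padded deficiency matrix for phase 2
  set Dhat : Fin n → Fin n → ℕ := fun i σ =>
    if i.1 < r then L - ρ i.1 σ.1 else T (i.1 - r) σ.1 with hDhatdef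
  have hDhatcap : ∀ i σ, Dhat i σ ≤ n - s := by
    intro i σ
    simp only [hDhatdef]
    split
    · have := hρL i.1 σ.1; omega
    · exact hTcap _ _
  have hsubmul : (n - s - r) * L + r * L = (n - s) * L := by
    rw [← add_mul]
    congr 1
    omega
  have hDhatrow : ∀ i, ∑ σ, Dhat i σ = (n - s) * L := by
    intro i
    have hcv : ∑ σ : Fin n, Dhat i σ =
        ∑ c ∈ Finset.range n, (if i.1 < r then L - ρ i.1 c else T (i.1 - r) c) := by
      rw [← Fin.sum_univ_eq_sum_range (fun c => if i.1 < r then L - ρ i.1 c else T (i.1 - r) c) n]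
    rw [hcv]
    by_cases hi : i.1 < r
    · simp only [if_pos hi]
      have hadd : ∑ c ∈ Finset.range n, (L - ρ i.1 c) + ∑ c ∈ Finset.range n, ρ i.1 c
          = ∑ _c ∈ Finset.range n, L := by
        rw [← Finset.sum_add_distrib]
        apply Finset.sum_congr rfl
        intro c _
        have := hρL i.1 c
        omega
      have hsl : ∑ _c ∈ Finset.range n, L = n * L := by simp [mul_comm]
      have hsub := Nat.sub_mul n s L
      have := hρsum i.1
      omega
    · simp only [if_neg hi]
      exact hTrow (i.1 - r) (by have := i.2; omega)
  have hDhatcol : ∀ σ, ∑ i, Dhat i σ = (n - s) * L := by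
    intro σ
    have hcv : ∑ i : Fin n, Dhat i σ =
        ∑ c ∈ Finset.range n, (if c < r then L - ρ c σ.1 else T (c - r) σ.1) := by
      rw [← Fin.sum_univ_eq_sum_range (fun c => if c < r then L - ρ c σ.1 else T (c - r) σ.1) n]
    rw [hcv]
    rw [← Finset.sum_range_add_sum_Ico _ (show r ≤ n by omega)]
    have e1 : ∑ c ∈ Finset.range r, (if c < r then L - ρ c σ.1 else T (c - r) σ.1)
        = ∑ c ∈ Finset.range r, (L - ρ c σ.1) := by
      apply Finset.sum_congr rfl
      intro c hc
      rw [if_pos (Finset.mem_range.1 hc)]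
    have e2 : ∑ c ∈ Finset.Ico r n, (if c < r then L - ρ c σ.1 else T (c - r) σ.1)
        = tdef σ.1 := by
      rw [Finset.sum_congr rfl (fun c hc => if_neg (by
        rw [Finset.mem_Ico] at hc
        omega))]
      rw [Finset.sum_Ico_eq_sum_range]
      rw [← hTcol σ.1]
      apply Finset.sum_congr rfl
      intro c _
      congr 1
      omega
    have e3 : ∑ c ∈ Finset.range r, (L - ρ c σ.1) + focc σ.1 = r * L := by
      simp only [hfdef]
      rw [← Finset.sum_add_distrib]
      have : ∀ c ∈ Finset.range r, (L - ρ c σ.1) + ρ c σ.1 = L := by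
        intro c _
        have := hρL c σ.1
        omega
      rw [Finset.sum_congr rfl this]
      simp [mul_comm]
    rw [e1, e2]
    have h5 := hfle σ.1
    simp only [htdef]
    omega
  obtain ⟨xs, hxs1, hxs2, hxs3, hxs4⟩ := decomp (n - s) L Dhat hDhatcap hDhatrow hDhatcol
  set xsn : ℕ → ℕ → ℕ → ℕ := fun c i σ =>
    if h : c < n - s ∧ i < n ∧ σ < n then xs ⟨c, h.1⟩ ⟨i, h.2.1⟩ ⟨σ, h.2.2⟩ else 0 with hxsndef
  have hxsn1 : ∀ c i σ, xsn c i σ ≤ 1 := by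
    intro c i σ
    simp only [hxsndef]
    split
    · exact hxs1 _ _ _
    · omega
  have hxsncell : ∀ c i, c < n - s → i < n → ∑ σ ∈ Finset.range n, xsn c i σ = L := by
    intro c i hc hi
    rw [← Fin.sum_univ_eq_sum_range (fun σ => xsn c i σ) n, ← hxs2 ⟨c, hc⟩ ⟨i, hi⟩]
    apply Finset.sum_congr rfl
    intro σ _
    simp only [hxsndef]
    rw [dif_pos ⟨hc, hi, σ.2⟩]
  have hxsncol : ∀ c σ, c < n - s → σ < n → ∑ i ∈ Finset.range n, xsn c i σ = L := by
    intro c σ hc hσ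
    rw [← Fin.sum_univ_eq_sum_range (fun i => xsn c i σ) n, ← hxs3 ⟨c, hc⟩ ⟨σ, hσ⟩]
    apply Finset.sum_congr rfl
    intro i _
    simp only [hxsndef]
    rw [dif_pos ⟨hc, i.2, hσ⟩]
  have hxsnsum : ∀ i σ, i < n → σ < n → ∑ c ∈ Finset.range (n - s), xsn c i σ
      = (if i < r then L - ρ i σ else T (i - r) σ) := by
    intro i σ hi hσ
    have h5 : ∑ c ∈ Finset.range (n - s), xsn c i σ = Dhat ⟨i, hi⟩ ⟨σ, hσ⟩ := by
      rw [← Fin.sum_univ_eq_sum_range (fun c => xsn c i σ) (n - s), ← hxs4 ⟨i, hi⟩ ⟨σ, hσ⟩]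
      apply Finset.sum_congr rfl
      intro c _
      simp only [hxsndef]
      rw [dif_pos ⟨c.2, hi, hσ⟩]
    rw [h5]
  -- Phase 3 : counts of each symbol in each column among the first r rows
  have hrn : r ≤ n ∧ s ≤ n := by omega
  set cfun : ℕ → ℕ → ℕ := fun j σ =>
    if j < s then ∑ i ∈ Finset.range r, F i j σ
    else ∑ i ∈ Finset.range r, xsn (j - s) i σ with hcfundef
  have hcL : ∀ j σ, j < n → σ < n → cfun j σ ≤ L := by
    intro j σ hj hσ
    by_cases hjs : j < s
    · simp only [hcfundef, if_pos hjs]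
      exact hFcol j σ
    · simp only [hcfundef, if_neg hjs]
      calc ∑ i ∈ Finset.range r, xsn (j-s) i σ ≤ ∑ i ∈ Finset.range n, xsn (j-s) i σ :=
          Finset.sum_le_sum_of_subset (Finset.range_subset_range.2 hrn.1)
        _ = L := hxsncol (j-s) σ (by omega) hσ
  have hcrow : ∀ j, j < n → ∑ σ ∈ Finset.range n, cfun j σ = r * L := by
    intro j hj
    by_cases hjs : j < s
    · simp only [hcfundef, if_pos hjs]
      rw [Finset.sum_comm]
      rw [Finset.sum_congr rfl (fun i _ => hFcell i j)]
      simp [mul_comm]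
    · simp only [hcfundef, if_neg hjs]
      rw [Finset.sum_comm]
      rw [Finset.sum_congr rfl (fun i hi => hxsncell (j-s) i (by omega)
        (by have := Finset.mem_range.1 hi; omega))]
      simp [mul_comm]
  have hccol : ∀ σ, σ < n → ∑ j ∈ Finset.range n, cfun j σ = r * L := by
    intro σ hσ
    rw [← Finset.sum_range_add_sum_Ico _ hrn.2]
    have e1 : ∑ j ∈ Finset.range s, cfun j σ = ∑ i ∈ Finset.range r, ρ i σ := by
      rw [Finset.sum_congr rfl (fun j hj => by
        simp only [hcfundef]
        rw [if_pos (Finset.mem_range.1 hj)])]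
      rw [Finset.sum_comm]
    have e2 : ∑ j ∈ Finset.Ico s n, cfun j σ = ∑ i ∈ Finset.range r, (L - ρ i σ) := by
      rw [Finset.sum_Ico_eq_sum_range]
      rw [Finset.sum_congr rfl (fun c hc => by
        simp only [hcfundef]
        rw [if_neg (by omega), show s + c - s = c from by omega])]
      rw [Finset.sum_comm]
      apply Finset.sum_congr rfl
      intro i hi
      have hir := Finset.mem_range.1 hi
      rw [hxsnsum i σ (by omega) hσ, if_pos hir]
    rw [e1, e2, ← Finset.sum_add_distrib]
    rw [Finset.sum_congr rfl (fun i (_ : i ∈ Finset.range r) => by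
      have := hρL i σ
      omega : ∀ i ∈ Finset.range r, ρ i σ + (L - ρ i σ) = L)]
    simp [mul_comm]
  set D3 : Fin n → Fin n → ℕ := fun j σ => L - cfun j.1 σ.1 with hD3def
  have hD3cap : ∀ j σ, D3 j σ ≤ n - r := by
    intro j σ
    simp only [hD3def]
    omega
  have hD3row : ∀ j, ∑ σ, D3 j σ = (n - r) * L := by
    intro j
    have hcv : ∑ σ : Fin n, D3 j σ = ∑ c ∈ Finset.range n, (L - cfun j.1 c) := by
      rw [← Fin.sum_univ_eq_sum_range (fun c => L - cfun j.1 c) n]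
    rw [hcv]
    have hadd : ∑ c ∈ Finset.range n, (L - cfun j.1 c) + ∑ c ∈ Finset.range n, cfun j.1 c
        = ∑ _c ∈ Finset.range n, L := by
      rw [← Finset.sum_add_distrib]
      apply Finset.sum_congr rfl
      intro c hc
      have := hcL j.1 c j.2 (Finset.mem_range.1 hc)
      omega
    have hsl : ∑ _c ∈ Finset.range n, L = n * L := by simp [mul_comm]
    have hsub := Nat.sub_mul n r L
    have := hcrow j.1 j.2
    omega
  have hD3col : ∀ σ, ∑ j, D3 j σ = (n - r) * L := by
    intro σ
    have hcv : ∑ j : Fin n, D3 j σ = ∑ c ∈ Finset.range n, (L - cfun c σ.1) := by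
      rw [← Fin.sum_univ_eq_sum_range (fun c => L - cfun c σ.1) n]
    rw [hcv]
    have hadd : ∑ c ∈ Finset.range n, (L - cfun c σ.1) + ∑ c ∈ Finset.range n, cfun c σ.1
        = ∑ _c ∈ Finset.range n, L := by
      rw [← Finset.sum_add_distrib]
      apply Finset.sum_congr rfl
      intro c hc
      have := hcL c σ.1 (Finset.mem_range.1 hc) σ.2
      omega
    have hsl : ∑ _c ∈ Finset.range n, L = n * L := by simp [mul_comm]
    have hsub := Nat.sub_mul n r L
    have := hccol σ.1 σ.2
    omega
  obtain ⟨ys, hys1, hys2, hys3, hys4⟩ := decomp (n - r) L D3 hD3cap hD3row hD3col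
  set ysn : ℕ → ℕ → ℕ → ℕ := fun c j σ =>
    if h : c < n - r ∧ j < n ∧ σ < n then ys ⟨c, h.1⟩ ⟨j, h.2.1⟩ ⟨σ, h.2.2⟩ else 0 with hysndef
  have hysn1 : ∀ c j σ, ysn c j σ ≤ 1 := by
    intro c j σ
    simp only [hysndef]
    split
    · exact hys1 _ _ _
    · omega
  have hysncell : ∀ c j, c < n - r → j < n → ∑ σ ∈ Finset.range n, ysn c j σ = L := by
    intro c j hc hj
    rw [← Fin.sum_univ_eq_sum_range (fun σ => ysn c j σ) n, ← hys2 ⟨c, hc⟩ ⟨j, hj⟩]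
    apply Finset.sum_congr rfl
    intro σ _
    simp only [hysndef]
    rw [dif_pos ⟨hc, hj, σ.2⟩]
  have hysncol : ∀ c σ, c < n - r → σ < n → ∑ j ∈ Finset.range n, ysn c j σ = L := by
    intro c σ hc hσ
    rw [← Fin.sum_univ_eq_sum_range (fun j => ysn c j σ) n, ← hys3 ⟨c, hc⟩ ⟨σ, hσ⟩]
    apply Finset.sum_congr rfl
    intro j _
    simp only [hysndef]
    rw [dif_pos ⟨hc, j.2, hσ⟩]
  have hysnsum : ∀ j σ, j < n → σ < n → ∑ c ∈ Finset.range (n - r), ysn c j σ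
      = L - cfun j σ := by
    intro j σ hj hσ
    have h5 : ∑ c ∈ Finset.range (n - r), ysn c j σ = D3 ⟨j, hj⟩ ⟨σ, hσ⟩ := by
      rw [← Fin.sum_univ_eq_sum_range (fun c => ysn c j σ) (n - r), ← hys4 ⟨j, hj⟩ ⟨σ, hσ⟩]
      apply Finset.sum_congr rfl
      intro c _
      simp only [hysndef]
      rw [dif_pos ⟨c.2, hj, hσ⟩]
    rw [h5]
  -- Final assembly
  refine ⟨fun i j σ =>
    if i.1 < r then (if j.1 < s then F i.1 j.1 σ.1 else xsn (j.1 - s) i.1 σ.1)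
    else ysn (i.1 - r) j.1 σ.1, ?_, ?_, ?_, ?_, ?_⟩
  · -- cell sums
    intro i j
    have hcv : ∑ σ : Fin n, (if i.1 < r then (if j.1 < s then F i.1 j.1 σ.1
          else xsn (j.1 - s) i.1 σ.1) else ysn (i.1 - r) j.1 σ.1)
        = ∑ c ∈ Finset.range n, (if i.1 < r then (if j.1 < s then F i.1 j.1 c
          else xsn (j.1 - s) i.1 c) else ysn (i.1 - r) j.1 c) := by
      rw [← Fin.sum_univ_eq_sum_range (fun c => if i.1 < r then (if j.1 < s then F i.1 j.1 c
        else xsn (j.1 - s) i.1 c) else ysn (i.1 - r) j.1 c) n]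
    rw [hcv]
    by_cases hi : i.1 < r
    · by_cases hjs : j.1 < s
      · simp only [if_pos hi, if_pos hjs]
        exact hFcell i.1 j.1
      · simp only [if_pos hi, if_neg hjs]
        exact hxsncell (j.1 - s) i.1 (by have := j.2; omega) (by have := i.2; omega)
    · simp only [if_neg hi]
      exact hysncell (i.1 - r) j.1 (by have := i.2; omega) j.2
  · -- row sums
    intro i σ
    have hcv : ∑ j : Fin n, (if i.1 < r then (if j.1 < s then F i.1 j.1 σ.1
          else xsn (j.1 - s) i.1 σ.1) else ysn (i.1 - r) j.1 σ.1)
        = ∑ c ∈ Finset.range n, (if i.1 < r then (if c < s then F i.1 c σ.1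
          else xsn (c - s) i.1 σ.1) else ysn (i.1 - r) c σ.1) := by
      rw [← Fin.sum_univ_eq_sum_range (fun c => if i.1 < r then (if c < s then F i.1 c σ.1
        else xsn (c - s) i.1 σ.1) else ysn (i.1 - r) c σ.1) n]
    rw [hcv]
    by_cases hi : i.1 < r
    · simp only [if_pos hi]
      rw [← Finset.sum_range_add_sum_Ico _ hrn.2]
      have e1 : ∑ c ∈ Finset.range s, (if c < s then F i.1 c σ.1 else xsn (c - s) i.1 σ.1)
          = ρ i.1 σ.1 := by
        rw [Finset.sum_congr rfl (fun c hc => if_pos (Finset.mem_range.1 hc))]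
      have e2 : ∑ c ∈ Finset.Ico s n, (if c < s then F i.1 c σ.1 else xsn (c - s) i.1 σ.1)
          = L - ρ i.1 σ.1 := by
        rw [Finset.sum_Ico_eq_sum_range]
        rw [Finset.sum_congr rfl (fun c hc => by
          rw [if_neg (by omega), show s + c - s = c from by omega])]
        rw [hxsnsum i.1 σ.1 (by have := i.2; omega) σ.2, if_pos hi]
      rw [e1, e2]
      have := hρL i.1 σ.1
      omega
    · simp only [if_neg hi]
      exact hysncol (i.1 - r) σ.1 (by have := i.2; omega) σ.2
  · -- column sums
    intro j σ
    have hcv : ∑ i : Fin n, (if i.1 < r then (if j.1 < s then F i.1 j.1 σ.1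
          else xsn (j.1 - s) i.1 σ.1) else ysn (i.1 - r) j.1 σ.1)
        = ∑ c ∈ Finset.range n, (if c < r then (if j.1 < s then F c j.1 σ.1
          else xsn (j.1 - s) c σ.1) else ysn (c - r) j.1 σ.1) := by
      rw [← Fin.sum_univ_eq_sum_range (fun c => if c < r then (if j.1 < s then F c j.1 σ.1
        else xsn (j.1 - s) c σ.1) else ysn (c - r) j.1 σ.1) n]
    rw [hcv]
    rw [← Finset.sum_range_add_sum_Ico _ hrn.1]
    have e1 : ∑ c ∈ Finset.range r, (if c < r then (if j.1 < s then F c j.1 σ.1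
        else xsn (j.1 - s) c σ.1) else ysn (c - r) j.1 σ.1) = cfun j.1 σ.1 := by
      rw [Finset.sum_congr rfl (fun c hc => if_pos (Finset.mem_range.1 hc))]
      simp only [hcfundef]
      by_cases hjs : j.1 < s
      · rw [if_pos hjs]
        exact Finset.sum_congr rfl (fun c _ => if_pos hjs)
      · rw [if_neg hjs]
        exact Finset.sum_congr rfl (fun c _ => if_neg hjs)
    have e2 : ∑ c ∈ Finset.Ico r n, (if c < r then (if j.1 < s then F c j.1 σ.1
        else xsn (j.1 - s) c σ.1) else ysn (c - r) j.1 σ.1) = L - cfun j.1 σ.1 := by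
      rw [Finset.sum_Ico_eq_sum_range]
      rw [Finset.sum_congr rfl (fun c hc => by
        rw [if_neg (by omega), show r + c - r = c from by omega])]
      exact hysnsum j.1 σ.1 j.2 σ.2
    rw [e1, e2]
    have := hcL j.1 σ.1 j.2 σ.2
    omega
  · -- simplicity
    intro i j σ
    dsimp only
    by_cases hi : i.1 < r
    · by_cases hjs : j.1 < s
      · rw [if_pos hi, if_pos hjs]; exact hF1 _ _ _
      · rw [if_pos hi, if_neg hjs]; exact hxsn1 _ _ _
    · rw [if_neg hi]; exact hysn1 _ _ _
  · -- containment of M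
    intro i j ℓ
    dsimp only
    rw [if_pos (show ((Fin.castLE (by omega : r ≤ n) i) : ℕ) < r from i.2),
      if_pos (show ((Fin.castLE (by omega : s ≤ n) j) : ℕ) < s from j.2)]
    have hv : F ((Fin.castLE (by omega : r ≤ n) i) : ℕ) ((Fin.castLE (by omega : s ≤ n) j) : ℕ)
        ((Fin.castLE (by omega : k ≤ n) ℓ) : ℕ) = F i.1 j.1 ℓ.1 := rfl
    rw [hv, hFM i.1 j.1 ℓ.1 ℓ.2]
    simp [hMndef]
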